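/- Let u ∈ ℝ^N satisfy ‖u‖_∞ ≤ π/2. Then the matrix D^{1/2} C D^{−1/2} + G(u)D⁻² is symmetric positive definite. -/

import Mathlib

open Real Matrix

noncomputable section

/-- Mesh size `h = 1/(N+1)`. -/
def hmesh (N : ℕ) : ℝ := 1 / (N + 1)

/-- Grid points `x_i = i·h`, `i = 1,…,N` (here `i : Fin N` corresponds to `i+1`). -/
def gridx (N : ℕ) (i : Fin N) : ℝ := ((i : ℕ) + 1) * hmesh N

/-- `A = (1/h²)·tridiag(−1,2,−1)`. -/
def matA (N : ℕ) : Matrix (Fin N) (Fin N) ℝ := fun i j =>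
  (1 / (hmesh N) ^ 2) *
    (if (i : ℕ) = (j : ℕ) then 2
     else if (i : ℕ) + 1 = (j : ℕ) ∨ (j : ℕ) + 1 = (i : ℕ) then -1 else 0)

/-- `B = (1/(2h))·tridiag(−1,0,1)`. -/
def matB (N : ℕ) : Matrix (Fin N) (Fin N) ℝ := fun i j =>
  (1 / (2 * hmesh N)) *
    (if (i : ℕ) + 1 = (j : ℕ) then 1
     else if (j : ℕ) + 1 = (i : ℕ) then -1 else 0)

/-- `D = diag(x_1,…,x_N)`. -/
def matD (N : ℕ) : Matrix (Fin N) (Fin N) ℝ := Matrix.diagonal (gridx N)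

/-- `D^β = diag(x_1^β,…,x_N^β)` (real powers). -/
def matDpow (N : ℕ) (β : ℝ) : Matrix (Fin N) (Fin N) ℝ :=
  Matrix.diagonal (fun i => gridx N i ^ β)

/-- `C = A − D⁻¹B`. -/
def matC (N : ℕ) : Matrix (Fin N) (Fin N) ℝ :=
  matA N - Matrix.diagonal (fun i => (gridx N i)⁻¹) * matB N

/-- `g(y) = sin(2y)/(2y)` for `y ≠ 0`, `g(0) = 1`. -/
def gfun (y : ℝ) : ℝ := if y = 0 then 1 else Real.sin (2 * y) / (2 * y)

/-- `G(u) = diag(g(u_1),…,g(u_N))`. -/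
def matG {N : ℕ} (u : Fin N → ℝ) : Matrix (Fin N) (Fin N) ℝ :=
  Matrix.diagonal (fun i => gfun (u i))

/-- The matrix `I + Δt(C + G(v)D⁻²)` of the semi-implicit Euler scheme. -/
def stepMat (N : ℕ) (Δt : ℝ) (v : Fin N → ℝ) : Matrix (Fin N) (Fin N) ℝ :=
  1 + Δt • (matC N + matG v * matDpow N (-2))

/-- Operator norm of a matrix induced by the maximum norm on `ℝ^N`
(the Pi norm on `Fin N → ℝ` is the sup norm). -/
def opNormInf {N : ℕ} (M : Matrix (Fin N) (Fin N) ℝ) : ℝ :=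
  ‖(LinearMap.toContinuousLinearMap (Matrix.mulVecLin M) :
      (Fin N → ℝ) →L[ℝ] (Fin N → ℝ))‖

end

namespace Stmt8Aux

lemma hmesh_pos (N : ℕ) : 0 < hmesh N := by
  unfold hmesh; positivity

lemma gridx_pos (N : ℕ) (i : Fin N) : 0 < gridx N i := by
  unfold gridx
  have := hmesh_pos N
  positivity

noncomputable def wfun (N k : ℕ) : ℝ := ((k : ℝ) + 1 / 2) * (N + 1)

lemma wfun_pos (N k : ℕ) : 0 < wfun N k := by unfold wfun; positivity

/-- entries of the (unweighted) difference matrix -/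
def efun (k a : ℕ) : ℝ := (if k = a then 1 else 0) - (if k = a + 1 then 1 else 0)

/-- the weighted difference matrix `P` with `PᵀP = D^{1/2} C D^{-1/2}`. -/
noncomputable def matP (N : ℕ) : Matrix (Fin (N + 1)) (Fin N) ℝ := fun k i =>
  Real.sqrt (wfun N k) * gridx N i ^ (-(1 / 2) : ℝ) * efun (k : ℕ) (i : ℕ)

lemma hsum (N : ℕ) (a b : ℕ) (ha : a < N + 1) :
    ∑ k ∈ Finset.range (N + 1),
      wfun N k * (if k = a then (1 : ℝ) else 0) * (if k = b then 1 else 0)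
      = if a = b then wfun N a else 0 := by
  have h : ∀ k, wfun N k * (if k = a then (1 : ℝ) else 0) * (if k = b then 1 else 0)
      = if k = a then (if a = b then wfun N a else 0) else 0 := by
    intro k
    by_cases h1 : k = a <;> by_cases h2 : k = b <;> subst_vars <;> simp_all
  simp_rw [h]
  rw [Finset.sum_ite_eq' (Finset.range (N + 1)) a]
  simp [Finset.mem_range.mpr ha]

lemma gridx_half (N : ℕ) (i : Fin N) :
    gridx N i ^ ((1 : ℝ) / 2) = gridx N i * gridx N i ^ (-(1 / 2) : ℝ) := by
  have h := gridx_pos N i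
  have h2 := Real.rpow_add h 1 (-(1 / 2))
  rw [Real.rpow_one] at h2
  rw [← h2]
  norm_num

lemma Ssum (N : ℕ) (i j : Fin N) :
    ∑ k ∈ Finset.range (N + 1), wfun N k * efun k (i : ℕ) * efun k (j : ℕ)
      = gridx N i * matC N i j := by
  have hi : (i : ℕ) < N + 1 := Nat.lt_succ_of_lt i.isLt
  have hi1 : (i : ℕ) + 1 < N + 1 := Nat.succ_lt_succ i.isLt
  have expand : ∀ k ∈ Finset.range (N + 1),
      wfun N k * efun k (i : ℕ) * efun k (j : ℕ)
        = wfun N k * (if k = (i : ℕ) then (1:ℝ) else 0) * (if k = (j : ℕ) then 1 else 0)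
          - wfun N k * (if k = (i : ℕ) then 1 else 0) * (if k = (j : ℕ) + 1 then 1 else 0)
          - wfun N k * (if k = (i : ℕ) + 1 then 1 else 0) * (if k = (j : ℕ) then 1 else 0)
          + wfun N k * (if k = (i : ℕ) + 1 then 1 else 0) * (if k = (j : ℕ) + 1 then 1 else 0) := by
    intro k _
    unfold efun
    ring
  rw [Finset.sum_congr rfl expand]
  simp only [Finset.sum_add_distrib, Finset.sum_sub_distrib]
  rw [hsum N (i : ℕ) (j : ℕ) hi, hsum N (i : ℕ) ((j : ℕ) + 1) hi,
    hsum N ((i : ℕ) + 1) (j : ℕ) hi1, hsum N ((i : ℕ) + 1) ((j : ℕ) + 1) hi1]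
  have hC : matC N i j = matA N i j - (gridx N i)⁻¹ * matB N i j := by
    simp [matC, Matrix.sub_apply, Matrix.diagonal_mul]
  rw [hC, mul_sub, ← mul_assoc, mul_inv_cancel₀ (ne_of_gt (gridx_pos N i)), one_mul]
  simp only [matA, matB]
  by_cases h1 : (i : ℕ) = (j : ℕ)
  · have e1 : ¬((i : ℕ) = (j : ℕ) + 1) := by omega
    have e2 : ¬((i : ℕ) + 1 = (j : ℕ)) := by omega
    have e3 : ¬((j : ℕ) + 1 = (i : ℕ)) := by omega
    have e4 : (i : ℕ) + 1 = (j : ℕ) + 1 := by omega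
    simp only [if_pos h1, if_neg e1, if_neg e2, if_neg e3, if_pos e4]
    unfold wfun gridx hmesh
    have hN1 : (N : ℝ) + 1 ≠ 0 := by positivity
    push_cast
    field_simp
    ring
  · by_cases h2 : (i : ℕ) + 1 = (j : ℕ)
    · have e1 : ¬((i : ℕ) = (j : ℕ) + 1) := by omega
      have e4 : ¬((i : ℕ) + 1 = (j : ℕ) + 1) := by omega
      have e5 : ((i : ℕ) + 1 = (j : ℕ) ∨ (j : ℕ) + 1 = (i : ℕ)) := Or.inl h2
      simp only [if_pos h2, if_neg h1, if_neg e1, if_neg e4, if_pos e5]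
      unfold wfun gridx hmesh
      have hN1 : (N : ℝ) + 1 ≠ 0 := by positivity
      push_cast
      field_simp
      ring
    · by_cases h3 : (j : ℕ) + 1 = (i : ℕ)
      · have e1 : ((i : ℕ) = (j : ℕ) + 1) := h3.symm
        have e4 : ¬((i : ℕ) + 1 = (j : ℕ) + 1) := by omega
        have e5 : ((i : ℕ) + 1 = (j : ℕ) ∨ (j : ℕ) + 1 = (i : ℕ)) := Or.inr h3
        simp only [if_pos e1, if_pos h3, if_neg h1, if_neg h2, if_neg e4, if_pos e5]
        unfold wfun gridx hmesh
        have hN1 : (N : ℝ) + 1 ≠ 0 := by positivity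
        push_cast
        field_simp
        ring
      · have e1 : ¬((i : ℕ) = (j : ℕ) + 1) := by omega
        have e4 : ¬((i : ℕ) + 1 = (j : ℕ) + 1) := by omega
        have e5 : ¬((i : ℕ) + 1 = (j : ℕ) ∨ (j : ℕ) + 1 = (i : ℕ)) := by
          push_neg; exact ⟨h2, h3⟩
        simp only [if_neg h1, if_neg h2, if_neg h3, if_neg e1, if_neg e4, if_neg e5]
        ring

lemma key (N : ℕ) :
    (matP N)ᵀ * matP N = matDpow N (1 / 2) * matC N * matDpow N (-(1 / 2)) := by
  ext i j
  have lhs : ((matP N)ᵀ * matP N) i j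
      = (gridx N i ^ (-(1 / 2) : ℝ) * gridx N j ^ (-(1 / 2) : ℝ))
        * ∑ k ∈ Finset.range (N + 1), wfun N k * efun k (i : ℕ) * efun k (j : ℕ) := by
    rw [Matrix.mul_apply]
    have hterm : ∀ k : Fin (N + 1), (matP N)ᵀ i k * matP N k j
        = (gridx N i ^ (-(1 / 2) : ℝ) * gridx N j ^ (-(1 / 2) : ℝ))
          * (wfun N (k : ℕ) * efun (k : ℕ) (i : ℕ) * efun (k : ℕ) (j : ℕ)) := by
      intro k
      rw [Matrix.transpose_apply]
      unfold matP
      have h2 : Real.sqrt (wfun N (k : ℕ)) * Real.sqrt (wfun N (k : ℕ)) = wfun N (k : ℕ) :=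
        Real.mul_self_sqrt (wfun_pos N (k : ℕ)).le
      linear_combination (gridx N i ^ (-(1 / 2) : ℝ) * gridx N j ^ (-(1 / 2) : ℝ)
        * efun (k : ℕ) (i : ℕ) * efun (k : ℕ) (j : ℕ)) * h2
    rw [Finset.sum_congr rfl (fun k _ => hterm k), ← Finset.mul_sum]
    congr 1
    exact Fin.sum_univ_eq_sum_range
      (fun k => wfun N k * efun k (i : ℕ) * efun k (j : ℕ)) (N + 1)
  rw [lhs, Ssum N i j]
  show _ = (matDpow N (1 / 2) * matC N * matDpow N (-(1 / 2))) i j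
  rw [matDpow, matDpow, Matrix.mul_diagonal, Matrix.diagonal_mul, gridx_half]
  ring

lemma matP_inj (N : ℕ) (v : Fin N → ℝ) (h : matP N *ᵥ v = 0) : v = 0 := by
  set d : Fin N → ℝ := fun i => gridx N i ^ (-(1 / 2) : ℝ) * v i with hd
  set y : ℕ → ℝ := fun a => ∑ i : Fin N, (if a = (i : ℕ) then d i else 0) with hy
  set z : ℕ → ℝ := fun a => ∑ i : Fin N, (if a = (i : ℕ) + 1 then d i else 0) with hz
  have hrow : ∀ k : Fin (N + 1), y (k : ℕ) = z (k : ℕ) := by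
    intro k
    have hk := congrFun h k
    have hexp : (matP N *ᵥ v) k
        = Real.sqrt (wfun N (k : ℕ)) * (y (k : ℕ) - z (k : ℕ)) := by
      simp only [Matrix.mulVec, dotProduct, hy, hz]
      rw [mul_sub, Finset.mul_sum, Finset.mul_sum, ← Finset.sum_sub_distrib]
      apply Finset.sum_congr rfl
      intro i _
      unfold matP efun
      by_cases c1 : (k : ℕ) = (i : ℕ) <;> by_cases c2 : (k : ℕ) = (i : ℕ) + 1 <;>
        simp [c1, c2, hd] <;> ring
    rw [hexp] at hk
    rw [Pi.zero_apply] at hk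
    have hs : Real.sqrt (wfun N (k : ℕ)) ≠ 0 :=
      ne_of_gt (Real.sqrt_pos.mpr (wfun_pos N (k : ℕ)))
    have := mul_eq_zero.mp hk
    rcases this with hc | hc
    · exact absurd hc hs
    · linarith [sub_eq_zero.mp hc]
  have hrow' : ∀ m, m < N + 1 → y m = z m := fun m hm => hrow ⟨m, hm⟩
  have hz0 : z 0 = 0 := by
    rw [hz]
    apply Finset.sum_eq_zero
    intro i _
    simp
  have hzsucc : ∀ m, z (m + 1) = y m := by
    intro m
    rw [hy, hz]
    apply Finset.sum_congr rfl
    intro i _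
    have : (m + 1 = (i : ℕ) + 1) ↔ (m = (i : ℕ)) := by omega
    simp [this]
  have hyall : ∀ m, m < N + 1 → y m = 0 := by
    intro m
    induction m with
    | zero => intro hm; rw [hrow' 0 hm, hz0]
    | succ n ih => intro hm; rw [hrow' (n + 1) hm, hzsucc]; exact ih (by omega)
  funext i
  have hyi : y (i : ℕ) = d i := by
    rw [hy]
    have hcond : ∀ j : Fin N, ((i : ℕ) = (j : ℕ)) ↔ i = j := by
      intro j; exact ⟨fun hh => Fin.ext hh, fun hh => by rw [hh]⟩
    simp only [hcond]
    simp
  have h0 := hyall (i : ℕ) (Nat.lt_succ_of_lt i.isLt)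
  rw [hyi] at h0
  have hpos : gridx N i ^ (-(1 / 2) : ℝ) ≠ 0 :=
    ne_of_gt (Real.rpow_pos_of_pos (gridx_pos N i) _)
  rw [hd] at h0
  rcases mul_eq_zero.mp h0 with hc | hc
  · exact absurd hc hpos
  · simpa using hc

lemma posDef_transpose_mul_self {m n : ℕ} (A : Matrix (Fin m) (Fin n) ℝ)
    (h : ∀ v, A *ᵥ v = 0 → v = 0) : (Aᵀ * A).PosDef := by
  rw [Matrix.posDef_iff_dotProduct_mulVec]
  constructor
  · have := Matrix.isHermitian_conjTranspose_mul_self A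
    simpa [Matrix.conjTranspose_eq_transpose_of_trivial] using this
  · intro x hx
    have h1 : star x = x := by simp
    have h2 : x ⬝ᵥ (Aᵀ * A) *ᵥ x = (A *ᵥ x) ⬝ᵥ (A *ᵥ x) := by
      rw [← Matrix.mulVec_mulVec, dotProduct_mulVec, Matrix.vecMul_transpose]
    rw [h1, h2]
    have hAx : A *ᵥ x ≠ 0 := fun hc => hx (h x hc)
    have := dotProduct_star_self_pos_iff (v := A *ᵥ x)
    simp only [star_trivial] at this
    exact this.mpr hAx

lemma gfun_nonneg {y : ℝ} (hy : |y| ≤ π / 2) : 0 ≤ gfun y := by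
  have hy1 := abs_le.mp hy
  unfold gfun
  split_ifs with h
  · norm_num
  · rcases lt_or_gt_of_ne h with hneg | hpos
    · have h1 : Real.sin (2 * y) ≤ 0 :=
        Real.sin_nonpos_of_nonpos_of_neg_pi_le (by linarith) (by linarith [hy1.1])
      have h2 : 2 * y ≤ 0 := by linarith
      exact div_nonneg_iff.mpr (Or.inr ⟨h1, h2⟩)
    · exact div_nonneg
        (Real.sin_nonneg_of_nonneg_of_le_pi (by linarith) (by linarith [hy1.2]))
        (by linarith)

end Stmt8Aux

/-- For `‖u‖_∞ ≤ π/2`, the matrix `D^{1/2} C D^{−1/2} + G(u)D⁻²` is symmetric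
positive definite. -/
theorem stmt8 {N : ℕ} (hN : 1 ≤ N) (u : Fin N → ℝ) (hu : ‖u‖ ≤ π / 2) :
    (matDpow N (1 / 2) * matC N * matDpow N (-(1 / 2)) + matG u * matDpow N (-2)).PosDef := by
  rw [← Stmt8Aux.key N]
  have hG : matG u * matDpow N (-2)
      = Matrix.diagonal (fun i => gfun (u i) * gridx N i ^ ((-2 : ℝ))) := by
    rw [matG, matDpow, Matrix.diagonal_mul_diagonal]
  rw [hG]
  refine Matrix.PosDef.add_posSemidef
    (Stmt8Aux.posDef_transpose_mul_self _ (Stmt8Aux.matP_inj N)) ?_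
  refine Matrix.posSemidef_diagonal_iff.mpr fun i => ?_
  have h1 : |u i| ≤ π / 2 := by
    have := norm_le_pi_norm u i
    rw [Real.norm_eq_abs] at this
    linarith
  exact mul_nonneg (Stmt8Aux.gfun_nonneg h1)
    (Real.rpow_pos_of_pos (Stmt8Aux.gridx_pos N i) _).le
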